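/- arXiv:1607.07185 — 5 statements merged into one kernel-verified Lean document; each statement's English description precedes it below -/
import Mathlib

section
/- Let g ≥ 2 and let Γ_g be the genus-g surface group. For every group homomorphism α : Γ_g → ℂˣ, the ℂ-vector space Z¹_α(Γ_g,ℂ) of α-twisted cocycles has dimension 2g if α is the trivial homomorphism, and dimension 2g − 1 otherwise. -/
/-- The surface group relator `∏ i, [aᵢ, bᵢ]` in the free group on `Fin g × Bool`,
where `(i, true)` plays the role of `aᵢ` and `(i, false)` the role of `bᵢ`. -/
def surfaceRelator (g : ℕ) : FreeGroup (Fin g × Bool) :=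
  (List.ofFn fun i : Fin g =>
    FreeGroup.of (i, true) * FreeGroup.of (i, false) *
      (FreeGroup.of (i, true))⁻¹ * (FreeGroup.of (i, false))⁻¹).prod

/-- The genus-`g` surface group `⟨a₁,b₁,…,a_g,b_g | ∏ᵢ [aᵢ,bᵢ]⟩`. -/
def SurfaceGroup (g : ℕ) : Type :=
  PresentedGroup ({surfaceRelator g} : Set (FreeGroup (Fin g × Bool)))

instance (g : ℕ) : Group (SurfaceGroup g) := by
  unfold SurfaceGroup; infer_instance

/-- The space `Z¹_α(G, ℂ)` of `α`-twisted cocycles, as a `ℂ`-subspace of `G → ℂ`. -/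
noncomputable def twistedCocycles {G : Type*} [Group G] (α : G →* ℂˣ) : Submodule ℂ (G → ℂ) where
  carrier := {l | ∀ x y : G, l (x * y) = l x + (α x : ℂ) * l y}
  zero_mem' := by intro x y; simp
  add_mem' := by
    intro a b ha hb x y
    simp only [Pi.add_apply, ha x y, hb x y]; ring
  smul_mem' := by
    intro c a ha x y
    simp only [Pi.smul_apply, smul_eq_mul, ha x y]; ring

open scoped Classical

/-! ### Auxiliary lemmas about twisted cocycles on an abstract group -/

section Cocycle
variable {G : Type*} [Group G]

lemma cocycle_one (β : G →* ℂˣ) (l : G → ℂ)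
    (hl : ∀ x y, l (x * y) = l x + (β x : ℂ) * l y) : l 1 = 0 := by
  have h := hl 1 1
  simp only [mul_one, map_one, Units.val_one, one_mul] at h
  exact left_eq_add.mp h

lemma cocycle_inv (β : G →* ℂˣ) (l : G → ℂ)
    (hl : ∀ x y, l (x * y) = l x + (β x : ℂ) * l y) (x : G) :
    l x⁻¹ = -((β x : ℂ)⁻¹ * l x) := by
  have h := hl x x⁻¹
  rw [mul_inv_cancel, cocycle_one β l hl] at h
  have hne : (β x : ℂ) ≠ 0 := Units.ne_zero _
  field_simp at h ⊢
  linear_combination -h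

lemma cocycle_comm (β : G →* ℂˣ) (l : G → ℂ)
    (hl : ∀ x y, l (x * y) = l x + (β x : ℂ) * l y) (a b : G) :
    l (a * b * a⁻¹ * b⁻¹) = (1 - (β b : ℂ)) * l a + ((β a : ℂ) - 1) * l b := by
  have hne : ∀ x : G, (β x : ℂ) ≠ 0 := fun x => Units.ne_zero _
  rw [hl (a * b * a⁻¹) b⁻¹, hl (a * b) a⁻¹, hl a b,
    cocycle_inv β l hl a, cocycle_inv β l hl b]
  simp only [map_mul, map_inv, Units.val_mul, Units.val_inv_eq_inv_val]
  field_simp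
  ring

lemma beta_comm_eq_one (β : G →* ℂˣ) (a b : G) :
    β (a * b * a⁻¹ * b⁻¹) = 1 := by
  simp only [map_mul, map_inv]
  rw [mul_comm (β a) (β b)]
  group

lemma cocycle_prod (β : G →* ℂˣ) (l : G → ℂ)
    (hl : ∀ x y, l (x * y) = l x + (β x : ℂ) * l y) {n : ℕ} (a b : Fin n → G) :
    l (List.ofFn fun i => a i * b i * (a i)⁻¹ * (b i)⁻¹).prod
      = ∑ i, ((1 - (β (b i) : ℂ)) * l (a i) + ((β (a i) : ℂ) - 1) * l (b i)) := by
  induction n with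
  | zero => simp [cocycle_one β l hl]
  | succ n ih =>
    rw [List.ofFn_succ, List.prod_cons, hl, Fin.sum_univ_succ,
      cocycle_comm β l hl, beta_comm_eq_one β,
      ih (fun i => a i.succ) (fun i => b i.succ)]
    simp

end Cocycle

/-! ### The affine group of `ℂ` -/

/-- The affine group of `ℂ`: pairs `(a, x)` acting as `t ↦ a t + x`. -/
@[ext] structure AffC where
  a : ℂˣ
  x : ℂ

noncomputable instance : Group AffC where
  mul p q := ⟨p.a * q.a, p.x + (p.a : ℂ) * q.x⟩
  one := ⟨1, 0⟩
  inv p := ⟨p.a⁻¹, -((p.a : ℂ)⁻¹ * p.x)⟩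
  mul_assoc p q r := by
    refine AffC.ext (mul_assoc _ _ _) ?_
    show (p.x + p.a * q.x) + (p.a * q.a : ℂˣ) * r.x = p.x + p.a * (q.x + q.a * r.x)
    push_cast
    ring
  one_mul p := by
    refine AffC.ext (one_mul _) ?_
    show (0 : ℂ) + ((1 : ℂˣ) : ℂ) * p.x = p.x
    simp
  mul_one p := by
    refine AffC.ext (mul_one _) ?_
    show p.x + (p.a : ℂ) * 0 = p.x
    simp
  inv_mul_cancel p := by
    refine AffC.ext (inv_mul_cancel _) ?_
    show -((p.a : ℂ)⁻¹ * p.x) + ((p.a⁻¹ : ℂˣ) : ℂ) * p.x = 0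
    simp

@[simp] lemma AffC.mul_a (p q : AffC) : (p * q).a = p.a * q.a := rfl
@[simp] lemma AffC.mul_x (p q : AffC) : (p * q).x = p.x + (p.a : ℂ) * q.x := rfl
@[simp] lemma AffC.one_a : (1 : AffC).a = 1 := rfl
@[simp] lemma AffC.one_x : (1 : AffC).x = 0 := rfl

/-- Projection to the multiplier. -/
noncomputable def AffC.proj : AffC →* ℂˣ where
  toFun := AffC.a
  map_one' := rfl
  map_mul' _ _ := rfl

/-! ### Setup for the surface group -/

/-- Images of the generators in the surface group. -/
def sOf {g : ℕ} (p : Fin g × Bool) : SurfaceGroup g := PresentedGroup.of p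

/-- The coefficients of the linear functional cutting out `Z¹_α(Γ_g)` inside `ℂ^{2g}`. -/
noncomputable def Lcoef {g : ℕ} (α : SurfaceGroup g →* ℂˣ) (p : Fin g × Bool) : ℂ :=
  if p.2 then 1 - (α (sOf (p.1, false)) : ℂ) else (α (sOf (p.1, true)) : ℂ) - 1

/-- The linear functional `v ↦ ∑ p Lcoef(p) v(p)`. -/
noncomputable def Lmap {g : ℕ} (α : SurfaceGroup g →* ℂˣ) : (Fin g × Bool → ℂ) →ₗ[ℂ] ℂ :=
  ∑ p : Fin g × Bool, Lcoef α p • LinearMap.proj p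

lemma Lcoef_true {g : ℕ} (α : SurfaceGroup g →* ℂˣ) (i : Fin g) :
    Lcoef α (i, true) = 1 - (α (sOf (i, false)) : ℂ) := by simp [Lcoef]

lemma Lcoef_false {g : ℕ} (α : SurfaceGroup g →* ℂˣ) (i : Fin g) :
    Lcoef α (i, false) = (α (sOf (i, true)) : ℂ) - 1 := by simp [Lcoef]

lemma Lmap_apply {g : ℕ} (α : SurfaceGroup g →* ℂˣ) (v : Fin g × Bool → ℂ) :
    Lmap α v = ∑ p : Fin g × Bool, Lcoef α p * v p := by
  simp [Lmap]

lemma Lmap_apply' {g : ℕ} (α : SurfaceGroup g →* ℂˣ) (v : Fin g × Bool → ℂ) :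
    Lmap α v = ∑ i : Fin g,
      ((1 - (α (sOf (i, false)) : ℂ)) * v (i, true) +
        ((α (sOf (i, true)) : ℂ) - 1) * v (i, false)) := by
  rw [Lmap_apply, Fintype.sum_prod_type]
  refine Finset.sum_congr rfl fun i _ => ?_
  simp [Lcoef, add_comm]

lemma mk_surfaceRelator_eq_one (g : ℕ) :
    (PresentedGroup.mk ({surfaceRelator g} : Set (FreeGroup (Fin g × Bool)))
        (surfaceRelator g) : SurfaceGroup g) = 1 := by
  show (QuotientGroup.mk (surfaceRelator g) :
    FreeGroup (Fin g × Bool) ⧸ Subgroup.normalClosure {surfaceRelator g}) = 1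
  rw [QuotientGroup.eq_one_iff]
  exact Subgroup.subset_normalClosure rfl

lemma prod_comm_eq_one (g : ℕ) :
    (List.ofFn fun i : Fin g =>
      sOf (i, true) * sOf (i, false) * (sOf (i, true))⁻¹ * (sOf (i, false))⁻¹).prod = 1 := by
  have h := mk_surfaceRelator_eq_one g
  rw [surfaceRelator, map_list_prod, List.map_ofFn] at h
  simp only [Function.comp_def, map_mul, map_inv] at h
  exact h

/-- Any `α`-twisted cocycle on the surface group gives a vector in the kernel of `Lmap α`. -/
lemma cocycle_mem_ker {g : ℕ} (α : SurfaceGroup g →* ℂˣ) (l : SurfaceGroup g → ℂ)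
    (hl : ∀ x y, l (x * y) = l x + (α x : ℂ) * l y) :
    Lmap α (fun p => l (sOf p)) = 0 := by
  have h := cocycle_prod α l hl (fun i : Fin g => sOf (i, true)) (fun i => sOf (i, false))
  rw [prod_comm_eq_one g, cocycle_one α l hl] at h
  rw [Lmap_apply']
  exact h.symm

/-- Conversely, any vector in the kernel of `Lmap α` comes from a twisted cocycle. -/
lemma exists_cocycle_of_mem_ker {g : ℕ} (α : SurfaceGroup g →* ℂˣ) (v : Fin g × Bool → ℂ)
    (hv : Lmap α v = 0) :
    ∃ l ∈ twistedCocycles α, ∀ p, l (sOf p) = v p := by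
  set fgen : Fin g × Bool → AffC := fun p => ⟨α (sOf p), v p⟩ with hfgen
  set f : FreeGroup (Fin g × Bool) →* AffC := FreeGroup.lift fgen with hf
  have hfa : ∀ w, (f w).a =
      α (PresentedGroup.mk ({surfaceRelator g} : Set (FreeGroup (Fin g × Bool))) w) := by
    have hcomp : AffC.proj.comp f =
        α.comp (PresentedGroup.mk ({surfaceRelator g} : Set (FreeGroup (Fin g × Bool)))) := by
      refine FreeGroup.ext_hom _ _ fun p => ?_
      simp only [MonoidHom.comp_apply, hf, FreeGroup.lift_apply_of]
      rfl
    exact fun w => DFunLike.congr_fun hcomp w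
  have hc : ∀ u w : FreeGroup (Fin g × Bool),
      (f (u * w)).x = (f u).x + ((AffC.proj.comp f) u : ℂ) * (f w).x := by
    intro u w; rw [map_mul]; rfl
  have hrel : f (surfaceRelator g) = 1 := by
    refine AffC.ext ?_ ?_
    · rw [hfa, mk_surfaceRelator_eq_one]; exact map_one α
    · show (f (surfaceRelator g)).x = (1 : AffC).x
      rw [surfaceRelator,
        cocycle_prod (AffC.proj.comp f) (fun w => (f w).x) hc
          (fun i : Fin g => FreeGroup.of (i, true)) (fun i => FreeGroup.of (i, false))]
      have hβ : ∀ p : Fin g × Bool, ((AffC.proj.comp f) (FreeGroup.of p) : ℂ) = α (sOf p) := by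
        intro p; simp [hf, AffC.proj, hfgen]
      have hx : ∀ p : Fin g × Bool, (f (FreeGroup.of p)).x = v p := by
        intro p; simp [hf, hfgen]
      simp only [hβ, hx, AffC.one_x]
      rw [← Lmap_apply' α v] at *
      exact hv
  have hrels : ∀ r ∈ ({surfaceRelator g} : Set (FreeGroup (Fin g × Bool))),
      FreeGroup.lift fgen r = 1 := by
    rintro r hr
    rw [Set.mem_singleton_iff] at hr
    rw [hr, ← hf]
    exact hrel
  set F : SurfaceGroup g →* AffC := PresentedGroup.toGroup hrels with hF
  have hFof : ∀ p : Fin g × Bool, F (sOf p) = fgen p := fun p => PresentedGroup.toGroup.of hrels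
  have hFa : ∀ x : SurfaceGroup g, (F x).a = α x := by
    have hcomp : AffC.proj.comp F = α := by
      refine PresentedGroup.ext fun p => ?_
      show (F (sOf p)).a = α (sOf p)
      rw [hFof]
    exact fun x => DFunLike.congr_fun hcomp x
  refine ⟨fun x => (F x).x, ?_, ?_⟩
  · intro x y
    show (F (x * y)).x = (F x).x + (α x : ℂ) * (F y).x
    rw [map_mul F x y]
    show (F x).x + ((F x).a : ℂ) * (F y).x = (F x).x + (α x : ℂ) * (F y).x
    rw [hFa]
  · intro p
    show (F (sOf p)).x = v p
    rw [hFof]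

lemma alpha_eq_one_of_Lmap_eq_zero {g : ℕ} (α : SurfaceGroup g →* ℂˣ)
    (h : Lmap α = 0) : α = 1 := by
  have hcoef : ∀ p, Lcoef α p = 0 := by
    intro p
    have := DFunLike.congr_fun h (Pi.single p 1)
    rw [Lmap_apply] at this
    simpa [Pi.single_apply, mul_ite, Finset.sum_ite_eq'] using this
  have hone : ∀ p : Fin g × Bool, α (sOf p) = 1 := by
    rintro ⟨i, b⟩
    cases b
    · have h1 := hcoef (i, true)
      rw [Lcoef_true α i] at h1
      exact Units.ext (by rw [Units.val_one]; linear_combination -h1)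
    · have h2 := hcoef (i, false)
      rw [Lcoef_false α i] at h2
      exact Units.ext (by rw [Units.val_one]; linear_combination h2)
  refine PresentedGroup.ext fun p => ?_
  show α (sOf p) = 1
  exact hone p

/-- for `g ≥ 2` and a homomorphism `α : Γ_g → ℂˣ`, the space
`Z¹_α(Γ_g, ℂ)` has dimension `2g` if `α` is trivial and `2g - 1` otherwise. -/
theorem finrank_twistedCocycles_surfaceGroup (g : ℕ) (hg : 2 ≤ g)
    (α : SurfaceGroup g →* ℂˣ) :
    Module.finrank ℂ (twistedCocycles α) = if α = 1 then 2 * g else 2 * g - 1 := by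
  classical
  -- The restriction map to values on generators, landing in `ker (Lmap α)`.
  have hmem : ∀ l : twistedCocycles α, Lmap α (fun p => (l : SurfaceGroup g → ℂ) (sOf p)) = 0 :=
    fun l => cocycle_mem_ker α l.1 l.2
  let Φ : twistedCocycles α →ₗ[ℂ] (Fin g × Bool → ℂ) :=
    { toFun := fun l p => (l : SurfaceGroup g → ℂ) (sOf p)
      map_add' := fun _ _ => rfl
      map_smul' := fun _ _ => rfl }
  let Φ' : twistedCocycles α →ₗ[ℂ] LinearMap.ker (Lmap α) :=
    Φ.codRestrict _ fun l => LinearMap.mem_ker.mpr (hmem l)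
  have hinj : Function.Injective Φ' := by
    intro l m hlm
    have h : ∀ p : Fin g × Bool, (l : SurfaceGroup g → ℂ) (sOf p)
        = (m : SurfaceGroup g → ℂ) (sOf p) := by
      intro p
      exact congrFun (congrArg Subtype.val hlm) p
    -- the difference vanishes on generators, hence everywhere
    have hd := (twistedCocycles α).sub_mem l.2 m.2
    set d : SurfaceGroup g → ℂ := (l : SurfaceGroup g → ℂ) - (m : SurfaceGroup g → ℂ) with hdd
    have hdc : ∀ x y : SurfaceGroup g, d (x * y) = d x + (α x : ℂ) * d y := hd
    let K : Subgroup (SurfaceGroup g) :=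
      { carrier := {x | d x = 0}
        one_mem' := cocycle_one α d hdc
        mul_mem' := by
          intro a b ha hb
          show d (a * b) = 0
          rw [hdc a b, ha, hb, mul_zero, add_zero]
        inv_mem' := by
          intro a ha
          show d a⁻¹ = 0
          rw [cocycle_inv α d hdc a, ha, mul_zero, neg_zero] }
    have hgen : ∀ p : Fin g × Bool, sOf p ∈ K := by
      intro p
      show d (sOf p) = 0
      simp only [hdd, Pi.sub_apply]
      rw [h p, sub_self]
    have hall : ∀ x : SurfaceGroup g, d x = 0 :=
      fun x => PresentedGroup.generated_by _ K hgen x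
    apply Subtype.ext
    funext x
    have := hall x
    simp only [hdd, Pi.sub_apply, sub_eq_zero] at this
    exact this
  have hsurj : Function.Surjective Φ' := by
    rintro ⟨v, hv⟩
    obtain ⟨l, hl, hlv⟩ := exists_cocycle_of_mem_ker α v (LinearMap.mem_ker.mp hv)
    refine ⟨⟨l, hl⟩, ?_⟩
    apply Subtype.ext
    funext p
    exact hlv p
  have e : twistedCocycles α ≃ₗ[ℂ] LinearMap.ker (Lmap α) :=
    LinearEquiv.ofBijective Φ' ⟨hinj, hsurj⟩
  rw [e.finrank_eq]
  have htot : Module.finrank ℂ (Fin g × Bool → ℂ) = 2 * g := by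
    rw [Module.finrank_fintype_fun_eq_card, Fintype.card_prod, Fintype.card_fin,
      Fintype.card_bool, mul_comm]
  by_cases hα : α = 1
  · rw [if_pos hα]
    have hL : Lmap α = 0 := by
      refine LinearMap.ext fun v => ?_
      rw [Lmap_apply]
      have : ∀ p, Lcoef α p = 0 := by
        rintro ⟨i, b⟩
        cases b
        · rw [Lcoef_false, hα]; simp
        · rw [Lcoef_true, hα]; simp
      simp [this]
    rw [hL, LinearMap.ker_zero, finrank_top, htot]
  · rw [if_neg hα]
    have hL : Lmap α ≠ 0 := fun h => hα (alpha_eq_one_of_Lmap_eq_zero α h)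
    obtain ⟨v, hv⟩ : ∃ v, Lmap α v ≠ 0 := by
      by_contra h
      push_neg at h
      exact hL (LinearMap.ext fun v => by rw [h v, LinearMap.zero_apply])
    have hrange : LinearMap.range (Lmap α) = ⊤ := by
      rw [LinearMap.range_eq_top]
      intro c
      refine ⟨(c / Lmap α v) • v, ?_⟩
      rw [map_smul, smul_eq_mul, div_mul_cancel₀ c hv]
    have hrk := LinearMap.finrank_range_add_finrank_ker (Lmap α)
    rw [hrange, finrank_top, Module.finrank_self, htot] at hrk
    omega
end

section
/- Let g ≥ 2, let Γ_g be the genus-g surface group, and let α : Γ_g → ℂˣ be a nontrivial group homomorphism. Then the map γ ↦ 1 − α(γ) is a nonzero element of Z¹_α(Γ_g,ℂ), and the quotient ℂ-vector space H¹_α(Γ_g,ℂ) := Z¹_α(Γ_g,ℂ) / ℂ·(1 − α) has dimension 2g − 2. -/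
/-- The map `γ ↦ 1 - α γ`, which is an `α`-twisted cocycle. -/
noncomputable def oneSubAlpha {G : Type*} [Group G] (α : G →* ℂˣ) : twistedCocycles α :=
  ⟨fun γ => 1 - (α γ : ℂ), by
    intro x y
    simp only [map_mul, Units.val_mul]
    ring⟩

namespace SGaux

/-! ### General twisted-cocycle lemmas -/
section cocycle
variable {G : Type*} [Group G] (β : G →* ℂˣ)

lemma cocycle_one {l : G → ℂ} (hl : l ∈ twistedCocycles β) : l 1 = 0 := by
  have := hl 1 1
  simp only [mul_one, map_one, Units.val_one, one_mul] at this
  linear_combination -this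

lemma cocycle_inv {l : G → ℂ} (hl : l ∈ twistedCocycles β) (x : G) :
    l x⁻¹ = -(((β x)⁻¹ : ℂˣ) : ℂ) * l x := by
  have h := hl x x⁻¹
  rw [mul_inv_cancel, cocycle_one β hl] at h
  have hx : (β x : ℂ) ≠ 0 := Units.ne_zero _
  have h2 : (β x : ℂ) * l x⁻¹ = - l x := by linear_combination -h
  apply mul_left_cancel₀ hx
  rw [h2, Units.val_inv_eq_inv_val]
  field_simp

lemma cocycle_eqOn {l m : G → ℂ} (hl : l ∈ twistedCocycles β) (hm : m ∈ twistedCocycles β)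
    {S : Set G} (hS : Subgroup.closure S = ⊤) (h : Set.EqOn l m S) : l = m := by
  let K : Subgroup G :=
    { carrier := {x | l x = m x}
      one_mem' := by simp [Set.mem_setOf_eq, cocycle_one β hl, cocycle_one β hm]
      mul_mem' := by
        intro a b ha hb
        simp only [Set.mem_setOf_eq] at *
        rw [hl a b, hm a b, ha, hb]
      inv_mem' := by
        intro a ha
        simp only [Set.mem_setOf_eq] at *
        rw [cocycle_inv β hl, cocycle_inv β hm, ha] }
  have hK : Subgroup.closure S ≤ K := (Subgroup.closure_le K).2 h
  rw [hS] at hK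
  funext x
  exact hK (Subgroup.mem_top x)

end cocycle

/-! ### The affine group -/
structure Aff where
  u : ℂˣ
  t : ℂ

namespace Aff

@[ext] lemma ext' {a b : Aff} (hu : a.u = b.u) (ht : a.t = b.t) : a = b := by
  cases a; cases b; simp_all

instance : Group Aff where
  mul a b := ⟨a.u * b.u, a.t + (a.u : ℂ) * b.t⟩
  one := ⟨1, 0⟩
  inv a := ⟨a.u⁻¹, -(((a.u⁻¹ : ℂˣ) : ℂ)) * a.t⟩
  mul_assoc a b c := by
    refine ext' (mul_assoc _ _ _) ?_
    show (a.t + a.u * b.t) + ((a.u * b.u : ℂˣ) : ℂ) * c.t = a.t + a.u * (b.t + b.u * c.t)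
    push_cast
    ring
  one_mul a := by
    refine ext' (one_mul _) ?_
    show (0 : ℂ) + ((1 : ℂˣ) : ℂ) * a.t = a.t
    simp
  mul_one a := by
    refine ext' (mul_one _) ?_
    show a.t + (a.u : ℂ) * 0 = a.t
    simp
  inv_mul_cancel a := by
    refine ext' (inv_mul_cancel _) ?_
    show -(((a.u⁻¹ : ℂˣ) : ℂ)) * a.t + ((a.u⁻¹ : ℂˣ) : ℂ) * a.t = 0
    ring

@[simp] lemma mul_u (a b : Aff) : (a * b).u = a.u * b.u := rfl
@[simp] lemma mul_t (a b : Aff) : (a * b).t = a.t + (a.u : ℂ) * b.t := rfl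
@[simp] lemma inv_u (a : Aff) : a⁻¹.u = a.u⁻¹ := rfl
@[simp] lemma inv_t (a : Aff) : a⁻¹.t = -(((a.u⁻¹ : ℂˣ) : ℂ)) * a.t := rfl
@[simp] lemma one_u : (1 : Aff).u = 1 := rfl
@[simp] lemma one_t : (1 : Aff).t = 0 := rfl
@[simp] lemma mk_u (u t) : (Aff.mk u t).u = u := rfl
@[simp] lemma mk_t (u t) : (Aff.mk u t).t = t := rfl

def uHom : Aff →* ℂˣ := ⟨⟨Aff.u, rfl⟩, fun _ _ => rfl⟩

@[simp] lemma uHom_apply (a : Aff) : uHom a = a.u := rfl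

lemma t_prod (l : List Aff) (h : ∀ a ∈ l, a.u = 1) :
    l.prod.t = (l.map Aff.t).sum := by
  induction l with
  | nil => rfl
  | cons a t ih =>
    simp only [List.prod_cons, List.map_cons, List.sum_cons, mul_t]
    rw [h a List.mem_cons_self, ih fun x hx => h x (List.mem_cons_of_mem _ hx)]
    simp

end Aff

/-! ### Surface group specifics -/
variable {g : ℕ} (α : SurfaceGroup g →* ℂˣ)

def mkSG : FreeGroup (Fin g × Bool) →* SurfaceGroup g :=
  PresentedGroup.mk ({surfaceRelator g} : Set (FreeGroup (Fin g × Bool)))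

lemma mkSG_surjective : Function.Surjective (mkSG (g := g)) :=
  PresentedGroup.mk_surjective _

def betaF : FreeGroup (Fin g × Bool) →* ℂˣ := α.comp mkSG

lemma mkSG_relator : mkSG (surfaceRelator g) = (1 : SurfaceGroup g) :=
  (QuotientGroup.eq_one_iff _).mpr (Subgroup.subset_normalClosure rfl)

/-- The affine representation of the free group attached to `f`. -/
noncomputable def phi (f : Fin g × Bool → ℂ) : FreeGroup (Fin g × Bool) →* Aff :=
  FreeGroup.lift fun s => ⟨betaF α (FreeGroup.of s), f s⟩

@[simp] lemma phi_of (f : Fin g × Bool → ℂ) (s : Fin g × Bool) :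
    phi α f (FreeGroup.of s) = ⟨betaF α (FreeGroup.of s), f s⟩ := by
  simp [phi]

lemma phi_u (f : Fin g × Bool → ℂ) (x : FreeGroup (Fin g × Bool)) :
    (phi α f x).u = betaF α x := by
  have : Aff.uHom.comp (phi α f) = betaF α := by
    apply FreeGroup.ext_hom
    intro s
    simp
  exact DFunLike.congr_fun this x

/-- The twisted cocycle on the free group attached to `f`. -/
noncomputable def lam (f : Fin g × Bool → ℂ) : FreeGroup (Fin g × Bool) → ℂ :=
  fun x => (phi α f x).t

lemma lam_mem (f : Fin g × Bool → ℂ) : lam α f ∈ twistedCocycles (betaF α) := by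
  intro x y
  show (phi α f (x * y)).t = _
  rw [map_mul, Aff.mul_t, phi_u]
  rfl

@[simp] lemma lam_of (f : Fin g × Bool → ℂ) (s : Fin g × Bool) :
    lam α f (FreeGroup.of s) = f s := by
  simp [lam]

/-- `f ↦ lam f` as a linear map into cocycles. -/
noncomputable def lamL : (Fin g × Bool → ℂ) →ₗ[ℂ] twistedCocycles (betaF α) where
  toFun f := ⟨lam α f, lam_mem α f⟩
  map_add' f f' := by
    apply Subtype.ext
    refine cocycle_eqOn (betaF α) (lam_mem α (f + f'))
      (Submodule.add_mem _ (lam_mem α f) (lam_mem α f')) (FreeGroup.closure_range_of _) ?_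
    rintro x ⟨s, rfl⟩
    show lam α (f + f') (FreeGroup.of s) = lam α f (FreeGroup.of s) + lam α f' (FreeGroup.of s)
    simp
  map_smul' c f := by
    apply Subtype.ext
    refine cocycle_eqOn (betaF α) (lam_mem α (c • f))
      (Submodule.smul_mem _ c (lam_mem α f)) (FreeGroup.closure_range_of _) ?_
    rintro x ⟨s, rfl⟩
    show lam α (c • f) (FreeGroup.of s) = c * lam α f (FreeGroup.of s)
    simp

/-- evaluation of `lam f` at the relator, as a linear functional. -/
noncomputable def LL : (Fin g × Bool → ℂ) →ₗ[ℂ] ℂ :=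
  (LinearMap.proj (surfaceRelator g)).comp
    ((twistedCocycles (betaF α)).subtype.comp (lamL α))

lemma LL_apply (f : Fin g × Bool → ℂ) : LL α f = lam α f (surfaceRelator g) := rfl

/-- The restriction map. -/
noncomputable def res : twistedCocycles α →ₗ[ℂ] (Fin g × Bool → ℂ) where
  toFun l := fun s => l.1 (mkSG (FreeGroup.of s))
  map_add' _ _ := rfl
  map_smul' _ _ := rfl

lemma pullback_mem (l : twistedCocycles α) :
    (fun x => l.1 (mkSG x)) ∈ twistedCocycles (betaF α) := by
  intro x y
  simp only [map_mul]
  exact l.2 (mkSG x) (mkSG y)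

lemma pullback_eq (l : twistedCocycles α) :
    (fun x => l.1 (mkSG x)) = lam α (res α l) := by
  refine cocycle_eqOn (betaF α) (pullback_mem α l) (lam_mem α _)
    (FreeGroup.closure_range_of _) ?_
  rintro x ⟨s, rfl⟩
  simp [res]

lemma res_injective : Function.Injective (res α) := by
  intro l l' h
  apply Subtype.ext
  have h1 := pullback_eq α l
  have h2 := pullback_eq α l'
  rw [h] at h1
  rw [← h2] at h1
  funext x
  obtain ⟨y, rfl⟩ := mkSG_surjective x
  exact congrFun h1 y

end SGaux

namespace SGaux
variable {g : ℕ} (α : SurfaceGroup g →* ℂˣ)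

lemma betaF_relator : betaF α (surfaceRelator g) = 1 := by
  show α (mkSG (surfaceRelator g)) = 1
  rw [mkSG_relator, map_one]

lemma lam_vanish (f : Fin g × Bool → ℂ) (hf : lam α f (surfaceRelator g) = 0) :
    ∀ x ∈ Subgroup.normalClosure ({surfaceRelator g} : Set (FreeGroup (Fin g × Bool))),
      lam α f x = 0 := by
  have hmem := lam_mem α f
  let K : Subgroup (FreeGroup (Fin g × Bool)) :=
    { carrier := {x | lam α f x = 0}
      one_mem' := cocycle_one _ hmem
      mul_mem' := by
        intro a b ha hb
        simp only [Set.mem_setOf_eq] at *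
        rw [hmem a b, ha, hb]
        ring
      inv_mem' := by
        intro a ha
        simp only [Set.mem_setOf_eq] at *
        rw [cocycle_inv _ hmem, ha]
        ring }
  have hle : Subgroup.normalClosure ({surfaceRelator g} : Set (FreeGroup (Fin g × Bool))) ≤ K := by
    refine (Subgroup.closure_le K).2 ?_
    intro x hx
    obtain ⟨a, ha, hconj⟩ := Group.mem_conjugatesOfSet_iff.1 hx
    rw [Set.mem_singleton_iff] at ha
    subst ha
    obtain ⟨c, rfl⟩ := isConj_iff.1 hconj
    show lam α f (c * surfaceRelator g * c⁻¹) = 0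
    have h1 := hmem (c * surfaceRelator g) c⁻¹
    rw [hmem c (surfaceRelator g), hf, map_mul, betaF_relator] at h1
    have h2 := hmem c c⁻¹
    rw [mul_inv_cancel, cocycle_one _ hmem] at h2
    rw [h1]
    simp only [Units.val_mul, Units.val_one, mul_one]
    linear_combination -h2
  exact fun x hx => hle hx

lemma range_res_eq : LinearMap.range (res α) = LinearMap.ker (LL α) := by
  ext f
  constructor
  · rintro ⟨l, rfl⟩
    have := congrFun (pullback_eq α l) (surfaceRelator g)
    simp only [LinearMap.mem_ker, LL_apply, ← this, mkSG_relator]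
    exact cocycle_one α l.2
  · intro hf
    have hf' : lam α f (surfaceRelator g) = 0 := hf
    have hvan := lam_vanish α f hf'
    -- define the descended function
    let lG : SurfaceGroup g → ℂ := fun q =>
      Quotient.liftOn' q (lam α f) (by
        intro a b hab
        have h : a⁻¹ * b ∈ Subgroup.normalClosure
            ({surfaceRelator g} : Set (FreeGroup (Fin g × Bool))) :=
          (QuotientGroup.leftRel_apply).1 hab
        have hb : b = a * (a⁻¹ * b) := by group
        rw [hb, lam_mem α f a (a⁻¹ * b), hvan _ h]
        ring)
    have hlG : ∀ x, lG (mkSG x) = lam α f x := fun x => rfl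
    have hmem : lG ∈ twistedCocycles α := by
      intro x y
      obtain ⟨a, rfl⟩ := mkSG_surjective x
      obtain ⟨b, rfl⟩ := mkSG_surjective y
      rw [← map_mul, hlG, hlG, hlG]
      exact lam_mem α f a b
    refine ⟨⟨lG, hmem⟩, ?_⟩
    funext s
    show lG (mkSG (FreeGroup.of s)) = f s
    rw [hlG]
    simp

end SGaux

namespace SGaux
variable {g : ℕ} (α : SurfaceGroup g →* ℂˣ)

lemma lam_relator (f : Fin g × Bool → ℂ) :
    lam α f (surfaceRelator g) =
      ∑ i : Fin g, ((1 - (betaF α (FreeGroup.of (i, false)) : ℂ)) * f (i, true) +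
        ((betaF α (FreeGroup.of (i, true)) : ℂ) - 1) * f (i, false)) := by
  have comm1 : ∀ a b : ℂˣ, a * b * a⁻¹ * b⁻¹ = 1 := by
    intro a b
    rw [mul_comm a b]
    group
  unfold lam surfaceRelator
  rw [map_list_prod, List.map_ofFn]
  rw [Aff.t_prod]
  · rw [List.map_ofFn, List.sum_ofFn]
    apply Finset.sum_congr rfl
    intro i _
    show (phi α f (FreeGroup.of (i, true) * FreeGroup.of (i, false) *
      (FreeGroup.of (i, true))⁻¹ * (FreeGroup.of (i, false))⁻¹)).t = _
    simp only [map_mul, map_inv, phi_of, Aff.mul_t, Aff.mul_u, Aff.inv_t, Aff.inv_u,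
      Aff.mk_u, Aff.mk_t, Units.val_mul, Units.val_inv_eq_inv_val]
    have hA : (betaF α (FreeGroup.of (i, true)) : ℂ) ≠ 0 := Units.ne_zero _
    have hB : (betaF α (FreeGroup.of (i, false)) : ℂ) ≠ 0 := Units.ne_zero _
    field_simp
    ring
  · intro a ha
    rw [List.mem_ofFn] at ha
    obtain ⟨i, rfl⟩ := ha
    show (phi α f (FreeGroup.of (i, true) * FreeGroup.of (i, false) *
      (FreeGroup.of (i, true))⁻¹ * (FreeGroup.of (i, false))⁻¹)).u = 1
    simp only [map_mul, map_inv, phi_of, Aff.mul_u, Aff.inv_u, Aff.mk_u]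
    exact comm1 _ _

lemma exists_gen (hα : α ≠ 1) : ∃ s : Fin g × Bool, betaF α (FreeGroup.of s) ≠ 1 := by
  by_contra h
  push_neg at h
  apply hα
  ext x
  have hx : x ∈ α.ker := by
    refine PresentedGroup.generated_by _ α.ker (fun j => ?_) x
    exact MonoidHom.mem_ker.2 (h j)
  simpa using MonoidHom.mem_ker.1 hx

lemma LL_ne_zero (hα : α ≠ 1) : LL α ≠ 0 := by
  obtain ⟨⟨i₀, b₀⟩, hs⟩ := exists_gen α hα
  intro hLL
  have key : ∀ f : Fin g × Bool → ℂ, lam α f (surfaceRelator g) = 0 := by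
    intro f
    have := congrFun (congrArg DFunLike.coe hLL) f
    simpa [LL_apply] using this
  cases b₀ with
  | true =>
    have h := key (Pi.single ((i₀, false) : Fin g × Bool) (1 : ℂ))
    rw [lam_relator] at h
    rw [Finset.sum_eq_single i₀] at h
    · rw [Pi.single_eq_of_ne (by simp) _, Pi.single_eq_same] at h
      have : (betaF α (FreeGroup.of (i₀, true)) : ℂ) = 1 := by linear_combination h
      exact hs (Units.val_eq_one.1 this)
    · intro i _ hi
      rw [Pi.single_eq_of_ne (by simp [hi]) _, Pi.single_eq_of_ne (by simp [hi]) _]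
      ring
    · intro hi
      exact absurd (Finset.mem_univ i₀) hi
  | false =>
    have h := key (Pi.single ((i₀, true) : Fin g × Bool) (1 : ℂ))
    rw [lam_relator] at h
    rw [Finset.sum_eq_single i₀] at h
    · rw [Pi.single_eq_same, Pi.single_eq_of_ne (by simp) _] at h
      have : (betaF α (FreeGroup.of (i₀, false)) : ℂ) = 1 := by linear_combination -h
      exact hs (Units.val_eq_one.1 this)
    · intro i _ hi
      rw [Pi.single_eq_of_ne (by simp [hi]) _, Pi.single_eq_of_ne (by simp [hi]) _]
      ring
    · intro hi
      exact absurd (Finset.mem_univ i₀) hi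

end SGaux


open SGaux

/-- for `g ≥ 2` and a nontrivial homomorphism `α : Γ_g → ℂˣ`,
the twisted cocycle `γ ↦ 1 - α γ` is nonzero, and the quotient space
`H¹_α(Γ_g, ℂ) = Z¹_α(Γ_g, ℂ) / ℂ·(1 - α)` has dimension `2g - 2`. -/
theorem finrank_twistedCohomology_surfaceGroup (g : ℕ) (hg : 2 ≤ g)
    (α : SurfaceGroup g →* ℂˣ) (hα : α ≠ 1) :
    oneSubAlpha α ≠ 0 ∧
      Module.finrank ℂ
        (↥(twistedCocycles α) ⧸ Submodule.span ℂ {oneSubAlpha α}) = 2 * g - 2 := by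
  obtain ⟨s, hs⟩ := exists_gen α hα
  have h1 : oneSubAlpha α ≠ 0 := by
    intro h0
    apply hs
    apply Units.val_eq_one.1
    have := congrFun (congrArg Subtype.val h0) (mkSG (FreeGroup.of s))
    show ((α (mkSG (FreeGroup.of s)) : ℂˣ) : ℂ) = 1
    simp only [oneSubAlpha] at this
    norm_num at this
    linear_combination -this
  refine ⟨h1, ?_⟩
  -- linear equivalence with the kernel of LL
  let e : (↥(twistedCocycles α)) ≃ₗ[ℂ] ↥(LinearMap.ker (LL α)) :=
    (LinearEquiv.ofInjective (res α) (res_injective α)).trans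
      (LinearEquiv.ofEq _ _ (range_res_eq α))
  haveI : FiniteDimensional ℂ (↥(twistedCocycles α)) := Module.Finite.equiv e.symm
  -- LL is surjective
  have hne := LL_ne_zero α hα
  obtain ⟨f, hf⟩ : ∃ f, LL α f ≠ 0 := by
    by_contra h
    push_neg at h
    exact hne (LinearMap.ext fun f => by rw [h f]; rfl)
  have hsurj : Function.Surjective (LL α) := by
    intro c
    refine ⟨(c / LL α f) • f, ?_⟩
    rw [map_smul, smul_eq_mul, div_mul_cancel₀ _ hf]
  have hrange : LinearMap.range (LL α) = ⊤ := LinearMap.range_eq_top.2 hsurj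
  have hrk := (LL α).finrank_range_add_finrank_ker
  rw [hrange, finrank_top, Module.finrank_self] at hrk
  have hdom : Module.finrank ℂ (Fin g × Bool → ℂ) = 2 * g := by
    rw [Module.finrank_pi]
    simp [Fintype.card_prod, mul_comm]
  rw [hdom] at hrk
  have hZ : Module.finrank ℂ (↥(twistedCocycles α)) = 2 * g - 1 := by
    rw [e.finrank_eq]
    omega
  have hspan : Module.finrank ℂ (↥(Submodule.span ℂ {oneSubAlpha α})) = 1 :=
    finrank_span_singleton h1
  have hquot := Submodule.finrank_quotient_add_finrank (Submodule.span ℂ {oneSubAlpha α})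
  rw [hspan, hZ] at hquot
  omega
end

section
/- Let g ≥ 2 and let x be a nonzero vector in ℝ^{2g}. Let V be a linear subspace of ℝ^{2g} such that M·V ⊆ V for every M ∈ Sp(2g,ℝ) with Mx = x. Then V is one of: the zero subspace, the line ℝx, the symplectic orthogonal x^⊥ = {y ∈ ℝ^{2g} : ω(x,y) = 0}, or all of ℝ^{2g}. -/
/-- The standard symplectic form on `ℝ^(2g)`:
`ω x y = ∑_{i=1}^g (xᵢ y_{g+i} - x_{g+i} yᵢ)`. -/
noncomputable def omegaForm (g : ℕ) (x y : Fin (2 * g) → ℝ) : ℝ :=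
  ∑ i : Fin g,
    (x ⟨i.val, by have := i.isLt; omega⟩ * y ⟨g + i.val, by have := i.isLt; omega⟩ -
      x ⟨g + i.val, by have := i.isLt; omega⟩ * y ⟨i.val, by have := i.isLt; omega⟩)

/-- The symplectic group `Sp(2g, ℝ)`: real `2g × 2g` matrices preserving `ω`. -/
def Sp (g : ℕ) : Set (Matrix (Fin (2 * g)) (Fin (2 * g)) ℝ) :=
  {M | ∀ x y : Fin (2 * g) → ℝ, omegaForm g (M.mulVec x) (M.mulVec y) = omegaForm g x y}

/-- The integer symplectic group `Sp(2g, ℤ)`, viewed as the set of symplectic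
matrices all of whose entries are integers. -/
def SpZ (g : ℕ) : Set (Matrix (Fin (2 * g)) (Fin (2 * g)) ℝ) :=
  {M | M ∈ Sp g ∧ ∀ i j, ∃ k : ℤ, M i j = (k : ℝ)}

/-- The symplectic orthogonal `x^⊥ = {y : ω(x,y) = 0}`, as a linear subspace. -/
noncomputable def symplOrth (g : ℕ) (x : Fin (2 * g) → ℝ) :
    Submodule ℝ (Fin (2 * g) → ℝ) where
  carrier := {y | omegaForm g x y = 0}
  zero_mem' := by simp [omegaForm]
  add_mem' := by
    intro a b ha hb
    simp only [Set.mem_setOf_eq] at *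
    have h : omegaForm g x (a + b) = omegaForm g x a + omegaForm g x b := by
      unfold omegaForm
      rw [← Finset.sum_add_distrib]
      exact Finset.sum_congr rfl fun i _ => by simp only [Pi.add_apply]; ring
    rw [h, ha, hb, add_zero]
  smul_mem' := by
    intro c a ha
    simp only [Set.mem_setOf_eq] at *
    have h : omegaForm g x (c • a) = c * omegaForm g x a := by
      unfold omegaForm
      rw [Finset.mul_sum]
      exact Finset.sum_congr rfl fun i _ => by
        simp only [Pi.smul_apply, smul_eq_mul]; ring
    rw [h, ha, mul_zero]

/-- The first standard basis vector `e₁` of `ℝ^(2g)`. -/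
def stdBasis1 (g : ℕ) : Fin (2 * g) → ℝ := fun j => if j.val = 0 then 1 else 0

section Aux
variable {g : ℕ}

lemma omega_add_left (x x' y : Fin (2*g) → ℝ) :
    omegaForm g (x + x') y = omegaForm g x y + omegaForm g x' y := by
  unfold omegaForm
  rw [← Finset.sum_add_distrib]
  exact Finset.sum_congr rfl fun i _ => by simp only [Pi.add_apply]; ring

lemma omega_smul_left (c : ℝ) (x y : Fin (2*g) → ℝ) :
    omegaForm g (c • x) y = c * omegaForm g x y := by
  unfold omegaForm
  rw [Finset.mul_sum]
  exact Finset.sum_congr rfl fun i _ => by simp only [Pi.smul_apply, smul_eq_mul]; ring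

lemma omega_add_right (x y y' : Fin (2*g) → ℝ) :
    omegaForm g x (y + y') = omegaForm g x y + omegaForm g x y' := by
  unfold omegaForm
  rw [← Finset.sum_add_distrib]
  exact Finset.sum_congr rfl fun i _ => by simp only [Pi.add_apply]; ring

lemma omega_smul_right (c : ℝ) (x y : Fin (2*g) → ℝ) :
    omegaForm g x (c • y) = c * omegaForm g x y := by
  unfold omegaForm
  rw [Finset.mul_sum]
  exact Finset.sum_congr rfl fun i _ => by simp only [Pi.smul_apply, smul_eq_mul]; ring

lemma omega_skew (x y : Fin (2*g) → ℝ) : omegaForm g x y = - omegaForm g y x := by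
  unfold omegaForm
  rw [← Finset.sum_neg_distrib]
  exact Finset.sum_congr rfl fun i _ => by ring

lemma omega_self (x : Fin (2*g) → ℝ) : omegaForm g x x = 0 := by
  have := omega_skew x x; linarith

lemma omega_sub_right (x y y' : Fin (2*g) → ℝ) :
    omegaForm g x (y - y') = omegaForm g x y - omegaForm g x y' := by
  unfold omegaForm
  rw [← Finset.sum_sub_distrib]
  exact Finset.sum_congr rfl fun i _ => by simp only [Pi.sub_apply]; ring

end Aux
section Aux2
variable {g : ℕ}

/-- coefficients of the linear functional `ω(v, ·)`. -/
noncomputable def omegaCoeff (g : ℕ) (v : Fin (2*g) → ℝ) : Fin (2*g) → ℝ := fun j =>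
  if h : j.val < g then -v ⟨g + j.val, by omega⟩ else v ⟨j.val - g, by omega⟩

lemma omega_eq_sum_coeff (v y : Fin (2*g) → ℝ) :
    omegaForm g v y = ∑ j : Fin (2*g), omegaCoeff g v j * y j := by
  let e : Fin g ⊕ Fin g ≃ Fin (2*g) := finSumFinEquiv.trans (finCongr (two_mul g).symm)
  have hs : (∑ j : Fin (2*g), omegaCoeff g v j * y j)
      = ∑ s : Fin g ⊕ Fin g, omegaCoeff g v (e s) * y (e s) :=
    (Fintype.sum_equiv e _ _ (fun s => rfl)).symm
  rw [hs, Fintype.sum_sum_type]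
  unfold omegaForm
  rw [← Finset.sum_add_distrib]
  apply Finset.sum_congr rfl
  intro i _
  have h1 : e (Sum.inl i) = ⟨i.val, by omega⟩ := by
    simp [e, Fin.ext_iff]
  have h2 : e (Sum.inr i) = ⟨g + i.val, by omega⟩ := by
    simp [e, Fin.ext_iff]; omega
  rw [h1, h2]
  have c1 : omegaCoeff g v ⟨i.val, by omega⟩ = -v ⟨g + i.val, by omega⟩ := by
    simp [omegaCoeff, i.isLt]
  have c2 : omegaCoeff g v ⟨g + i.val, by omega⟩ = v ⟨i.val, by omega⟩ := by
    have : ¬ (g + i.val < g) := by omega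
    simp only [omegaCoeff, this, dif_neg]
    congr 1
    simp [Fin.ext_iff]
  rw [c1, c2]
  ring

end Aux2
section Aux3
variable {g : ℕ}

lemma omega_single (u : Fin (2*g) → ℝ) (k : Fin (2*g)) :
    omegaForm g u (Pi.single k 1) = omegaCoeff g u k := by
  rw [omega_eq_sum_coeff, Finset.sum_eq_single k]
  · simp
  · intro b _ hb
    simp [Pi.single_apply, hb]
  · intro h; simp at h

lemma omega_nondeg (u : Fin (2*g) → ℝ) (h : ∀ v, omegaForm g v u = 0) : u = 0 := by
  have hc : ∀ k, omegaCoeff g u k = 0 := by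
    intro k
    have h1 := h (Pi.single k 1)
    rw [omega_skew, omega_single] at h1
    linarith
  funext j
  simp only [Pi.zero_apply]
  by_cases hj : j.val < g
  · have h1 := hc ⟨g + j.val, by omega⟩
    have hn : ¬ (g + j.val < g) := by omega
    simp only [omegaCoeff] at h1
    rw [dif_neg hn] at h1
    have he : (⟨g + j.val - g, by omega⟩ : Fin (2*g)) = j := by
      rw [Fin.ext_iff]; simp
    rwa [he] at h1
  · have h1 := hc ⟨j.val - g, by omega⟩
    have hlt : j.val - g < g := by omega
    simp only [omegaCoeff, hlt, dif_pos] at h1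
    have he : (⟨g + (j.val - g), by omega⟩ : Fin (2*g)) = j := by
      rw [Fin.ext_iff]; simp; omega
    rw [he] at h1
    linarith

/-- a functional-comparison lemma: if every `v` symplectically orthogonal to `x`
is also orthogonal to `u`, then `u` is a multiple of `x`. -/
lemma omega_span_of_orth (x u : Fin (2*g) → ℝ) (hx : x ≠ 0)
    (h : ∀ v, omegaForm g v x = 0 → omegaForm g v u = 0) : ∃ c : ℝ, u = c • x := by
  have hw : ∃ w, omegaForm g w x ≠ 0 := by
    by_contra hcon
    push_neg at hcon
    exact hx (omega_nondeg x hcon)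
  obtain ⟨w, hw⟩ := hw
  refine ⟨omegaForm g w u / omegaForm g w x, ?_⟩
  have key : u - (omegaForm g w u / omegaForm g w x) • x = 0 := by
    apply omega_nondeg
    intro v
    have hv' : omegaForm g (v - (omegaForm g v x / omegaForm g w x) • w) x = 0 := by
      rw [show v - (omegaForm g v x / omegaForm g w x) • w
          = v + (-(omegaForm g v x / omegaForm g w x)) • w by module]
      rw [omega_add_left, omega_smul_left]
      field_simp
      ring
    have hu' := h _ hv'
    rw [show v - (omegaForm g v x / omegaForm g w x) • w
        = v + (-(omegaForm g v x / omegaForm g w x)) • w by module,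
      omega_add_left, omega_smul_left] at hu'
    rw [omega_sub_right, omega_smul_right]
    have hvu : omegaForm g v u = (omegaForm g v x / omegaForm g w x) * omegaForm g w u := by
      field_simp at hu' ⊢
      linarith
    rw [hvu]
    field_simp
    ring
  exact sub_eq_zero.mp key
end Aux3
section Aux4
variable {g : ℕ}

/-- Symplectic transvection along `v`. -/
noncomputable def Tmat (g : ℕ) (v : Fin (2*g) → ℝ) : Matrix (Fin (2*g)) (Fin (2*g)) ℝ :=
  1 + Matrix.vecMulVec v (omegaCoeff g v)

lemma Tmat_mulVec (v y : Fin (2*g) → ℝ) :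
    (Tmat g v).mulVec y = y + omegaForm g v y • v := by
  unfold Tmat
  rw [Matrix.add_mulVec, Matrix.one_mulVec]
  congr 1
  funext i
  simp only [Matrix.mulVec, Matrix.vecMulVec_apply, dotProduct, Pi.smul_apply,
    smul_eq_mul]
  rw [omega_eq_sum_coeff, Finset.sum_mul]
  exact Finset.sum_congr rfl fun j _ => by ring

lemma Tmat_mem_Sp (v : Fin (2*g) → ℝ) : Tmat g v ∈ Sp g := by
  intro y z
  rw [Tmat_mulVec, Tmat_mulVec, omega_add_left, omega_add_right, omega_add_right,
    omega_smul_left, omega_smul_right, omega_smul_right, omega_smul_left, omega_self]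
  have h1 : omegaForm g y v = - omegaForm g v y := by rw [omega_skew]
  rw [h1]
  ring

lemma Tmat_fix (x v : Fin (2*g) → ℝ) (h : omegaForm g v x = 0) :
    (Tmat g v).mulVec x = x := by
  rw [Tmat_mulVec, h, zero_smul, add_zero]

end Aux4
section Aux5
variable {g : ℕ}

lemma mem_symplOrth {x y : Fin (2*g) → ℝ} :
    y ∈ symplOrth g x ↔ omegaForm g x y = 0 := Iff.rfl

lemma exists_two_t (a b : ℝ) (hb : b ≠ 0) :
    ∃ t₁ t₂ : ℝ, t₁ ≠ t₂ ∧ a + t₁*b ≠ 0 ∧ a + t₂*b ≠ 0 := by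
  by_cases h1 : a + 1*b = 0
  · exact ⟨-1, 2, by norm_num, fun hc => hb (by linarith), fun hc => hb (by linarith)⟩
  · by_cases h2 : a + (-1)*b = 0
    · exact ⟨1, 2, by norm_num, h1, fun hc => hb (by linarith)⟩
    · exact ⟨1, -1, by norm_num, h1, h2⟩

end Aux5

/-- for `g ≥ 2` and `x ≠ 0` in `ℝ^(2g)`, any linear subspace `V`
invariant under every symplectic matrix fixing `x` equals `0`, `ℝx`, `x^⊥`
or `ℝ^(2g)`. -/
theorem stabilizer_invariant_subspace_classification (g : ℕ) (hg : 2 ≤ g)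
    (x : Fin (2 * g) → ℝ) (hx : x ≠ 0) (V : Submodule ℝ (Fin (2 * g) → ℝ))
    (hV : ∀ M ∈ Sp g, M.mulVec x = x → ∀ v ∈ V, M.mulVec v ∈ V) :
    V = ⊥ ∨ V = Submodule.span ℝ {x} ∨ V = symplOrth g x ∨ V = ⊤ := by
  -- Key fact from transvections
  have K : ∀ v, omegaForm g v x = 0 → ∀ u ∈ V, omegaForm g v u • v ∈ V := by
    intro v hvx u hu
    have h1 := hV (Tmat g v) (Tmat_mem_Sp v) (Tmat_fix x v hvx) u hu
    rw [Tmat_mulVec] at h1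
    have h2 := V.sub_mem h1 hu
    simpa using h2
  -- Main claim: a member of V not on the line ℝx forces x^⊥ ⊆ V.
  have claim : ∀ u ∈ V, (¬ ∃ c : ℝ, u = c • x) → ∀ w, omegaForm g w x = 0 → w ∈ V := by
    intro u hu hux w hwx
    have hv' : ∃ v', omegaForm g v' x = 0 ∧ omegaForm g v' u ≠ 0 := by
      by_contra hcon
      push_neg at hcon
      exact hux (omega_span_of_orth x u hx hcon)
    obtain ⟨v', hv'x, hv'u⟩ := hv'
    obtain ⟨t₁, t₂, ht, h₁, h₂⟩ :=
      exists_two_t (omegaForm g w u) (omegaForm g v' u) hv'u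
    have hmem : ∀ t : ℝ, (omegaForm g w u + t * omegaForm g v' u) • (w + t • v') ∈ V := by
      intro t
      have hvx2 : omegaForm g (w + t • v') x = 0 := by
        rw [omega_add_left, omega_smul_left, hwx, hv'x]; ring
      have h3 := K _ hvx2 u hu
      rwa [omega_add_left, omega_smul_left] at h3
    have m₁ : w + t₁ • v' ∈ V := by
      have h4 := V.smul_mem (omegaForm g w u + t₁ * omegaForm g v' u)⁻¹ (hmem t₁)
      rwa [smul_smul, inv_mul_cancel₀ h₁, one_smul] at h4
    have m₂ : w + t₂ • v' ∈ V := by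
      have h4 := V.smul_mem (omegaForm g w u + t₂ * omegaForm g v' u)⁻¹ (hmem t₂)
      rwa [smul_smul, inv_mul_cancel₀ h₂, one_smul] at h4
    have hvV : v' ∈ V := by
      have hsub := V.sub_mem m₁ m₂
      rw [show (w + t₁ • v') - (w + t₂ • v') = (t₁ - t₂) • v' by module] at hsub
      have h5 := V.smul_mem (t₁ - t₂)⁻¹ hsub
      rwa [smul_smul, inv_mul_cancel₀ (sub_ne_zero.mpr ht), one_smul] at h5
    have hw : w = (w + t₁ • v') - t₁ • v' := by module
    rw [hw]
    exact V.sub_mem m₁ (V.smul_mem t₁ hvV)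
  by_cases hsub : ∀ u ∈ V, ∃ c : ℝ, u = c • x
  · by_cases hbot : V = ⊥
    · exact Or.inl hbot
    · right; left
      obtain ⟨u, hu, hune⟩ := (Submodule.ne_bot_iff V).mp hbot
      obtain ⟨c, hc⟩ := hsub u hu
      have hcne : c ≠ 0 := by rintro rfl; exact hune (by simpa using hc)
      apply le_antisymm
      · intro v hv
        obtain ⟨d, hd⟩ := hsub v hv
        rw [hd]
        exact Submodule.smul_mem _ d (Submodule.mem_span_singleton_self x)
      · have hxV : x ∈ V := by
          have : x = c⁻¹ • u := by rw [hc, smul_smul, inv_mul_cancel₀ hcne, one_smul]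
          rw [this]
          exact V.smul_mem _ hu
        rwa [Submodule.span_singleton_le_iff_mem]
  · push_neg at hsub
    obtain ⟨u, hu, hucx⟩ := hsub
    have horth : ∀ w, omegaForm g w x = 0 → w ∈ V :=
      claim u hu (fun ⟨c, hc⟩ => hucx c hc)
    by_cases horthV : ∀ v ∈ V, omegaForm g x v = 0
    · right; right; left
      apply le_antisymm
      · intro v hv
        exact mem_symplOrth.mpr (horthV v hv)
      · intro w hw
        have hw' : omegaForm g w x = 0 := by
          rw [omega_skew, mem_symplOrth.mp hw, neg_zero]
        exact horth w hw'
    · right; right; right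
      push_neg at horthV
      obtain ⟨u', hu', hu'x⟩ := horthV
      rw [Submodule.eq_top_iff']
      intro y
      have hyo : omegaForm g (y - (omegaForm g x y / omegaForm g x u') • u') x = 0 := by
        rw [omega_skew, omega_sub_right, omega_smul_right]
        field_simp
        ring
      have hy1 : y - (omegaForm g x y / omegaForm g x u') • u' ∈ V := horth _ hyo
      have hy2 : y = (y - (omegaForm g x y / omegaForm g x u') • u')
          + (omegaForm g x y / omegaForm g x u') • u' := by module
      rw [hy2]
      exact V.add_mem hy1 (V.smul_mem _ hu')
end

section
/- Let g ≥ 2 and let x ∈ ℝ^{2g}. If x ∉ ℚ^{2g}, then the set {M·x + k : M ∈ Sp(2g,ℤ), k ∈ ℤ^{2g}} is dense in ℝ^{2g}. If x ∈ ℚ^{2g}, then the image of the orbit {M·x : M ∈ Sp(2g,ℤ)} in the torus ℝ^{2g}/ℤ^{2g} is finite. -/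
open Finset

lemma dense_int_combo {α : ℝ} (hα : Irrational α) (c t ε : ℝ) (hε : 0 < ε) :
    ∃ n k : ℤ, |c + n * α + k - t| < ε := by
  set S := AddSubgroup.closure ({α, 1} : Set ℝ) with hS
  have hd : Dense (S : Set ℝ) := by
    rcases S.dense_or_cyclic with h | ⟨a, ha⟩
    · exact h
    · exfalso
      have hαS : α ∈ S := AddSubgroup.subset_closure (by simp)
      have h1S : (1 : ℝ) ∈ S := AddSubgroup.subset_closure (by simp)
      rw [ha, AddSubgroup.mem_closure_singleton] at hαS h1S
      obtain ⟨m, hm⟩ := hαS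
      obtain ⟨n, hn⟩ := h1S
      rw [zsmul_eq_mul] at hm hn
      have hn0 : (n : ℝ) ≠ 0 := by
        intro h0
        rw [h0, zero_mul] at hn
        norm_num at hn
      apply hα
      refine ⟨(m : ℚ) / (n : ℚ), ?_⟩
      have hnq : ((n : ℚ) : ℝ) ≠ 0 := by push_cast; exact hn0
      push_cast
      rw [div_eq_iff hn0]
      linear_combination (n : ℝ) * hm - (m : ℝ) * hn
  obtain ⟨y, hyS, hy⟩ := hd.exists_dist_lt (t - c) hε
  obtain ⟨n, k, hnk⟩ := AddSubgroup.mem_closure_pair.mp hyS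
  rw [zsmul_eq_mul, zsmul_eq_mul, mul_one] at hnk
  refine ⟨n, k, ?_⟩
  rw [Real.dist_eq] at hy
  have : c + n * α + k - t = -(t - c - y) := by rw [← hnk]; ring
  rw [this, abs_neg]
  exact hy

lemma irr_unique {α : ℝ} (hα : Irrational α) {c : ℝ} {n n' : ℤ}
    (h : ¬Irrational (c + n * α)) (h' : ¬Irrational (c + n' * α)) : n = n' := by
  rw [Irrational, not_not] at h h'
  obtain ⟨q, hq⟩ := h
  obtain ⟨q', hq'⟩ := h'
  by_contra hne
  have : ((n - n' : ℤ) : ℝ) * α = (q : ℝ) - q' := by push_cast; rw [hq, hq']; ring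
  have hirr : Irrational (((n - n' : ℤ) : ℝ) * α) :=
    hα.intCast_mul (sub_ne_zero.mpr hne)
  rw [this] at hirr
  have : ((q - q' : ℚ) : ℝ) = (q : ℝ) - q' := by push_cast; ring
  rw [← this] at hirr
  exact Rat.not_irrational _ hirr

lemma dense_int_combo_irr {α : ℝ} (hα : Irrational α) (c t ε : ℝ) (hε : 0 < ε) :
    ∃ n k : ℤ, |c + n * α + k - t| < ε ∧ Irrational (c + n * α) := by
  set ε' := min ε (1/2) with hε'
  have hε'0 : 0 < ε' := lt_min hε (by norm_num)
  have hε'ε : ε' ≤ ε := min_le_left _ _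
  have hε'h : ε' ≤ 1/2 := min_le_right _ _
  obtain ⟨n₁, k₁, h₁⟩ := dense_int_combo hα c t (ε'/4) (by linarith)
  by_cases hrat : Irrational (c + n₁ * α)
  · exact ⟨n₁, k₁, lt_of_lt_of_le h₁ (by linarith), hrat⟩
  · set v := c + n₁ * α + k₁ with hv
    obtain ⟨n₂, k₂, h₂⟩ := dense_int_combo hα c (v + ε'/3) (ε'/4) (by linarith)
    have hne : n₂ ≠ n₁ := by
      intro he
      rw [he] at h₂
      have hd : c + n₁ * α + k₂ - (v + ε'/3) = (k₂ - k₁ : ℤ) - ε'/3 := by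
        rw [hv]; push_cast; ring
      rw [hd, abs_lt] at h₂
      have h1 : (0 : ℝ) < (k₂ - k₁ : ℤ) := by linarith
      have h2 : ((k₂ - k₁ : ℤ) : ℝ) < 1 := by linarith
      have : (0 : ℤ) < k₂ - k₁ := by exact_mod_cast h1
      have : (1 : ℝ) ≤ ((k₂ - k₁ : ℤ) : ℝ) := by exact_mod_cast this
      linarith
    refine ⟨n₂, k₂, ?_, ?_⟩
    · have e1 : c + (n₂:ℝ) * α + k₂ - t
          = (c + n₂ * α + k₂ - (v + ε'/3)) + (ε'/3 + (v - t)) := by ring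
      have b1 := abs_add_le (c + (n₂:ℝ) * α + k₂ - (v + ε'/3)) (ε'/3 + (v - t))
      have b2 := abs_add_le (ε'/3) (v - t)
      have b3 : |ε'/3| = ε'/3 := abs_of_pos (by linarith)
      have hvt : |v - t| < ε'/4 := h₁
      rw [e1]
      linarith
    · by_contra hbad
      exact hne (irr_unique hα hbad hrat)

namespace SpzAux
open Finset

variable {g : ℕ}

def up (g : ℕ) (x : Fin (2 * g) → ℝ) : Fin g → ℝ :=
  fun i => x ⟨i.val, by have := i.isLt; omega⟩

def lo (g : ℕ) (x : Fin (2 * g) → ℝ) : Fin g → ℝ :=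
  fun i => x ⟨g + i.val, by have := i.isLt; omega⟩

lemma omega_eq (x y : Fin (2 * g) → ℝ) :
    omegaForm g x y = ∑ i : Fin g, (up g x i * lo g y i - lo g x i * up g y i) := rfl

lemma sum_split (f : Fin (2 * g) → ℝ) :
    ∑ j, f j = (∑ j : Fin g, f ⟨j.val, by have := j.isLt; omega⟩)
      + ∑ j : Fin g, f ⟨g + j.val, by have := j.isLt; omega⟩ := by
  have key : ∑ j : Fin (g + g), f (Fin.cast (two_mul g).symm j) = ∑ j, f j :=
    Fintype.sum_equiv (finCongr (two_mul g).symm) _ _ (fun i => rfl)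
  rw [← key, Fin.sum_univ_add]
  congr 1 <;> exact Finset.sum_congr rfl fun j _ => congrArg f (Fin.ext (by simp))

/-- block matrix -/
def blk (P Q R S : Matrix (Fin g) (Fin g) ℝ) : Matrix (Fin (2 * g)) (Fin (2 * g)) ℝ :=
  fun i j =>
    if hi : i.val < g then
      if hj : j.val < g then P ⟨i.val, hi⟩ ⟨j.val, hj⟩
      else Q ⟨i.val, hi⟩ ⟨j.val - g, by have := j.isLt; omega⟩
    else
      if hj : j.val < g then R ⟨i.val - g, by have := i.isLt; omega⟩ ⟨j.val, hj⟩
      else S ⟨i.val - g, by have := i.isLt; omega⟩ ⟨j.val - g, by have := j.isLt; omega⟩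

variable {P Q R S : Matrix (Fin g) (Fin g) ℝ}

lemma blk_int (hP : ∀ i j, ∃ k : ℤ, P i j = (k : ℝ)) (hQ : ∀ i j, ∃ k : ℤ, Q i j = (k : ℝ))
    (hR : ∀ i j, ∃ k : ℤ, R i j = (k : ℝ)) (hS : ∀ i j, ∃ k : ℤ, S i j = (k : ℝ)) :
    ∀ i j, ∃ k : ℤ, blk P Q R S i j = (k : ℝ) := by
  intro i j
  unfold blk
  split
  · split
    · exact hP _ _
    · exact hQ _ _
  · split
    · exact hR _ _
    · exact hS _ _

lemma up_blk_mulVec (x : Fin (2 * g) → ℝ) (i : Fin g) :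
    up g ((blk P Q R S).mulVec x) i = P.mulVec (up g x) i + Q.mulVec (lo g x) i := by
  show ∑ j, blk P Q R S ⟨i.val, by have := i.isLt; omega⟩ j * x j = _
  rw [sum_split (g := g) (fun j => blk P Q R S ⟨i.val, by have := i.isLt; omega⟩ j * x j)]
  simp only [Matrix.mulVec, dotProduct]
  congr 1
  · refine Finset.sum_congr rfl fun j _ => ?_
    have h1 : blk P Q R S ⟨i.val, by have := i.isLt; omega⟩ ⟨j.val, by have := j.isLt; omega⟩
        = P i j := by
      unfold blk
      rw [dif_pos i.isLt, dif_pos j.isLt]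
    rw [h1]; rfl
  · refine Finset.sum_congr rfl fun j _ => ?_
    have h1 : blk P Q R S ⟨i.val, by have := i.isLt; omega⟩
        ⟨g + j.val, by have := j.isLt; omega⟩ = Q i j := by
      unfold blk
      rw [dif_pos i.isLt, dif_neg (by omega : ¬ g + j.val < g)]
      congr 1 <;> exact Fin.ext (by simp)
    rw [h1]; rfl

lemma lo_blk_mulVec (x : Fin (2 * g) → ℝ) (i : Fin g) :
    lo g ((blk P Q R S).mulVec x) i = R.mulVec (up g x) i + S.mulVec (lo g x) i := by
  show ∑ j, blk P Q R S ⟨g + i.val, by have := i.isLt; omega⟩ j * x j = _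
  rw [sum_split (g := g) (fun j => blk P Q R S ⟨g + i.val, by have := i.isLt; omega⟩ j * x j)]
  simp only [Matrix.mulVec, dotProduct]
  congr 1
  · refine Finset.sum_congr rfl fun j _ => ?_
    have h1 : blk P Q R S ⟨g + i.val, by have := i.isLt; omega⟩
        ⟨j.val, by have := j.isLt; omega⟩ = R i j := by
      unfold blk
      rw [dif_neg (by omega : ¬ g + i.val < g), dif_pos j.isLt]
      congr 1 <;> exact Fin.ext (by simp)
    rw [h1]; rfl
  · refine Finset.sum_congr rfl fun j _ => ?_
    have h1 : blk P Q R S ⟨g + i.val, by have := i.isLt; omega⟩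
        ⟨g + j.val, by have := j.isLt; omega⟩ = S i j := by
      unfold blk
      rw [dif_neg (by omega : ¬ g + i.val < g), dif_neg (by omega : ¬ g + j.val < g)]
      congr 1 <;> exact Fin.ext (by simp)
    rw [h1]; rfl

end SpzAux

namespace SpzAux
open Finset

variable {g : ℕ}

/-- symmetric integer matrix supported on row/column `p` -/
def cmat (c : Fin g → ℤ) (p : Fin g) : Matrix (Fin g) (Fin g) ℝ :=
  fun i j => if i = p then (c j : ℝ) else if j = p then (c i : ℝ) else 0

lemma cmat_symm (c : Fin g → ℤ) (p : Fin g) (i j : Fin g) : cmat c p i j = cmat c p j i := by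
  unfold cmat
  by_cases hi : i = p <;> by_cases hj : j = p <;> simp [hi, hj]

lemma cmat_int (c : Fin g → ℤ) (p : Fin g) : ∀ i j, ∃ k : ℤ, cmat c p i j = (k : ℝ) := by
  intro i j
  unfold cmat
  by_cases hi : i = p
  · exact ⟨c j, by simp [hi]⟩
  · by_cases hj : j = p
    · exact ⟨c i, by simp [hi, hj]⟩
    · exact ⟨0, by simp [hi, hj]⟩

lemma one_int : ∀ i j : Fin g, ∃ k : ℤ, (1 : Matrix (Fin g) (Fin g) ℝ) i j = (k : ℝ) := by
  intro i j
  refine ⟨if i = j then 1 else 0, ?_⟩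
  rw [Matrix.one_apply]
  split <;> simp

lemma zero_int : ∀ i j : Fin g, ∃ k : ℤ, (0 : Matrix (Fin g) (Fin g) ℝ) i j = (k : ℝ) :=
  fun i j => ⟨0, by simp⟩

lemma neg_one_int : ∀ i j : Fin g, ∃ k : ℤ, (-1 : Matrix (Fin g) (Fin g) ℝ) i j = (k : ℝ) := by
  intro i j
  refine ⟨if i = j then -1 else 0, ?_⟩
  rw [Matrix.neg_apply, Matrix.one_apply]
  split <;> simp

lemma pairing_symm {C : Matrix (Fin g) (Fin g) ℝ} (hC : ∀ i j, C i j = C j i)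
    (a b : Fin g → ℝ) : ∑ i, a i * C.mulVec b i = ∑ i, C.mulVec a i * b i := by
  simp only [Matrix.mulVec, dotProduct, Finset.mul_sum, Finset.sum_mul]
  rw [Finset.sum_comm]
  refine Finset.sum_congr rfl fun i _ => Finset.sum_congr rfl fun j _ => ?_
  rw [hC j i]
  ring

lemma cmat_mulVec_ne (c : Fin g → ℤ) {p i : Fin g} (h : i ≠ p) (φ : Fin g → ℝ) :
    (cmat c p).mulVec φ i = (c i : ℝ) * φ p := by
  have hrow : ∀ j, cmat c p i j * φ j = if j = p then (c i : ℝ) * φ p else 0 := by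
    intro j
    unfold cmat
    rw [if_neg h]
    split_ifs with hj
    · rw [hj]
    · ring
  simp only [Matrix.mulVec, dotProduct, hrow]
  simp

lemma cmat_mulVec_p (c : Fin g → ℤ) (p : Fin g) (φ : Fin g → ℝ) :
    (cmat c p).mulVec φ p = ∑ j, (c j : ℝ) * φ j := by
  simp only [Matrix.mulVec, dotProduct, cmat, if_pos rfl]
  simp

/-- lower-triangular symplectic block matrix -/
def matLow (c : Fin g → ℤ) (p : Fin g) : Matrix (Fin (2 * g)) (Fin (2 * g)) ℝ :=
  blk 1 0 (cmat c p) 1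

/-- upper-triangular symplectic block matrix -/
def matUp (c : Fin g → ℤ) (p : Fin g) : Matrix (Fin (2 * g)) (Fin (2 * g)) ℝ :=
  blk 1 (cmat c p) 0 1

/-- the symplectic rotation J -/
def matJ (g : ℕ) : Matrix (Fin (2 * g)) (Fin (2 * g)) ℝ := blk 0 1 (-1) 0

lemma up_matLow (c : Fin g → ℤ) (p : Fin g) (x : Fin (2 * g) → ℝ) (i : Fin g) :
    up g ((matLow c p).mulVec x) i = up g x i := by
  rw [matLow, up_blk_mulVec]
  simp [Matrix.one_mulVec, Matrix.zero_mulVec]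

lemma lo_matLow (c : Fin g → ℤ) (p : Fin g) (x : Fin (2 * g) → ℝ) (i : Fin g) :
    lo g ((matLow c p).mulVec x) i = (cmat c p).mulVec (up g x) i + lo g x i := by
  rw [matLow, lo_blk_mulVec]
  simp [Matrix.one_mulVec]

lemma up_matUp (c : Fin g → ℤ) (p : Fin g) (x : Fin (2 * g) → ℝ) (i : Fin g) :
    up g ((matUp c p).mulVec x) i = up g x i + (cmat c p).mulVec (lo g x) i := by
  rw [matUp, up_blk_mulVec]
  simp [Matrix.one_mulVec]

lemma lo_matUp (c : Fin g → ℤ) (p : Fin g) (x : Fin (2 * g) → ℝ) (i : Fin g) :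
    lo g ((matUp c p).mulVec x) i = lo g x i := by
  rw [matUp, lo_blk_mulVec]
  simp [Matrix.one_mulVec, Matrix.zero_mulVec]

lemma up_matJ (x : Fin (2 * g) → ℝ) (i : Fin g) :
    up g ((matJ g).mulVec x) i = lo g x i := by
  rw [matJ, up_blk_mulVec]
  simp [Matrix.one_mulVec, Matrix.zero_mulVec]

lemma lo_matJ (x : Fin (2 * g) → ℝ) (i : Fin g) :
    lo g ((matJ g).mulVec x) i = - up g x i := by
  rw [matJ, lo_blk_mulVec]
  simp [Matrix.zero_mulVec, Matrix.neg_mulVec, Matrix.one_mulVec]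

lemma matLow_mem (c : Fin g → ℤ) (p : Fin g) : matLow c p ∈ SpZ g := by
  constructor
  · intro x y
    rw [omega_eq, omega_eq]
    have hterm : ∀ i ∈ Finset.univ, up g ((matLow c p).mulVec x) i * lo g ((matLow c p).mulVec y) i
        - lo g ((matLow c p).mulVec x) i * up g ((matLow c p).mulVec y) i
        = (up g x i * lo g y i - lo g x i * up g y i)
          + (up g x i * (cmat c p).mulVec (up g y) i - (cmat c p).mulVec (up g x) i * up g y i) := by
      intro i _
      rw [up_matLow, lo_matLow, up_matLow, lo_matLow]
      ring
    rw [Finset.sum_congr rfl hterm, Finset.sum_add_distrib, Finset.sum_sub_distrib,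
      Finset.sum_sub_distrib, pairing_symm (cmat_symm c p), sub_self, add_zero]
  · exact blk_int one_int zero_int (cmat_int c p) one_int

lemma matUp_mem (c : Fin g → ℤ) (p : Fin g) : matUp c p ∈ SpZ g := by
  constructor
  · intro x y
    rw [omega_eq, omega_eq]
    have hterm : ∀ i ∈ Finset.univ, up g ((matUp c p).mulVec x) i * lo g ((matUp c p).mulVec y) i
        - lo g ((matUp c p).mulVec x) i * up g ((matUp c p).mulVec y) i
        = (up g x i * lo g y i - lo g x i * up g y i)
          + ((cmat c p).mulVec (lo g x) i * lo g y i - lo g x i * (cmat c p).mulVec (lo g y) i) := by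
      intro i _
      rw [up_matUp, lo_matUp, up_matUp, lo_matUp]
      ring
    rw [Finset.sum_congr rfl hterm, Finset.sum_add_distrib, Finset.sum_sub_distrib,
      Finset.sum_sub_distrib, pairing_symm (cmat_symm c p), sub_self, add_zero]
  · exact blk_int one_int (cmat_int c p) zero_int one_int

lemma matJ_mem : matJ g ∈ SpZ g := by
  constructor
  · intro x y
    rw [omega_eq, omega_eq]
    refine Finset.sum_congr rfl fun i _ => ?_
    rw [up_matJ, lo_matJ, up_matJ, lo_matJ]
    ring
  · exact blk_int zero_int one_int neg_one_int zero_int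

lemma one_mem : (1 : Matrix (Fin (2 * g)) (Fin (2 * g)) ℝ) ∈ SpZ g := by
  constructor
  · intro x y
    rw [Matrix.one_mulVec, Matrix.one_mulVec]
  · exact one_int

lemma mul_mem {M N : Matrix (Fin (2 * g)) (Fin (2 * g)) ℝ} (hM : M ∈ SpZ g) (hN : N ∈ SpZ g) :
    M * N ∈ SpZ g := by
  constructor
  · intro x y
    rw [← Matrix.mulVec_mulVec, ← Matrix.mulVec_mulVec, hM.1, hN.1]
  · intro i j
    choose a ha using hM.2
    choose b hb using hN.2
    refine ⟨∑ l, a i l * b l j, ?_⟩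
    rw [Matrix.mul_apply]
    push_cast
    exact Finset.sum_congr rfl fun l _ => by rw [ha, hb]

end SpzAux

namespace SpzAux
open Finset

variable {g : ℕ}

lemma adjust (p : Fin g) (φ ψ t : Fin g → ℝ) (hφ : Irrational (φ p)) {ε : ℝ} (hε : 0 < ε) :
    ∃ c : Fin g → ℤ,
      (∀ i, ∃ k : ℤ, |ψ i + (cmat c p).mulVec φ i + k - t i| < ε) ∧
      Irrational (ψ p + (cmat c p).mulVec φ p) := by
  have hch : ∀ i : Fin g, ∃ n : ℤ, ∃ k : ℤ, |ψ i + n * φ p + k - t i| < ε := fun i =>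
    dense_int_combo hφ (ψ i) (t i) ε hε
  choose c₀ hc₀ using hch
  set E : ℝ := ∑ j ∈ Finset.univ.erase p, (c₀ j : ℝ) * φ j with hE
  obtain ⟨m, k₁, hm, hirr⟩ := dense_int_combo_irr hφ (ψ p + E) (t p) ε hε
  set c : Fin g → ℤ := Function.update c₀ p m with hc
  have hcne : ∀ i : Fin g, i ≠ p → c i = c₀ i := fun i hi => Function.update_of_ne hi _ _
  have hsum : (cmat c p).mulVec φ p = (m : ℝ) * φ p + E := by
    rw [cmat_mulVec_p]
    rw [← Finset.add_sum_erase Finset.univ (fun j => (c j : ℝ) * φ j) (Finset.mem_univ p)]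
    congr 1
    · rw [hc, Function.update_self]
    · refine Finset.sum_congr rfl fun j hj => ?_
      rw [hcne j (Finset.ne_of_mem_erase hj)]
  refine ⟨c, fun i => ?_, ?_⟩
  · by_cases hip : i = p
    · subst hip
      refine ⟨k₁, ?_⟩
      have : ψ i + (cmat c i).mulVec φ i + (k₁ : ℝ) - t i = ψ i + E + m * φ i + k₁ - t i := by
        rw [hsum]; ring
      rw [this]
      exact hm
    · refine ⟨(hc₀ i).choose, ?_⟩
      have h1 : (cmat c p).mulVec φ i = (c₀ i : ℝ) * φ p := by
        rw [cmat_mulVec_ne c hip, hcne i hip]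
      rw [h1]
      exact (hc₀ i).choose_spec
  · have : ψ p + (cmat c p).mulVec φ p = ψ p + E + m * φ p := by rw [hsum]; ring
    rw [this]
    exact hirr

lemma dense_orbit (x : Fin (2 * g) → ℝ) (j : Fin (2 * g)) (hj : Irrational (x j)) :
    Dense {y : Fin (2 * g) → ℝ |
      ∃ M ∈ SpZ g, ∃ k : Fin (2 * g) → ℤ,
        y = M.mulVec x + fun i => ((k i : ℤ) : ℝ)} := by
  rw [Metric.dense_iff]
  intro y ε hε
  -- Step 0: get the irrational coordinate into the upper half
  obtain ⟨M₀, hM₀, p, hp⟩ :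
      ∃ M₀ ∈ SpZ g, ∃ p : Fin g, Irrational (up g (M₀.mulVec x) p) := by
    by_cases hjg : j.val < g
    · refine ⟨1, one_mem, ⟨j.val, hjg⟩, ?_⟩
      rw [Matrix.one_mulVec]
      have : up g x ⟨j.val, hjg⟩ = x j := congrArg x (Fin.ext rfl)
      rwa [this]
    · refine ⟨matJ g, matJ_mem, ⟨j.val - g, by have := j.isLt; omega⟩, ?_⟩
      rw [up_matJ]
      have : lo g x ⟨j.val - g, by have := j.isLt; omega⟩ = x j :=
        congrArg x (Fin.ext (by simp; omega))
      rwa [this]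
  set x₁ := M₀.mulVec x with hx₁
  -- Step 1: fix the lower half
  obtain ⟨c, hcA, hcI⟩ := adjust p (up g x₁) (lo g x₁)
    (fun i => y ⟨g + i.val, by have := i.isLt; omega⟩) hp hε
  set x₂ := (matLow c p).mulVec x₁ with hx₂
  have h2up : ∀ i, up g x₂ i = up g x₁ i := fun i => up_matLow c p x₁ i
  have h2lo : ∀ i, lo g x₂ i = lo g x₁ i + (cmat c p).mulVec (up g x₁) i := fun i => by
    rw [hx₂, lo_matLow]; ring
  have h2I : Irrational (lo g x₂ p) := by rw [h2lo]; exact hcI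
  have h2A : ∀ i, ∃ k : ℤ, |lo g x₂ i + k - y ⟨g + i.val, by have := i.isLt; omega⟩| < ε := by
    intro i
    obtain ⟨k, hk⟩ := hcA i
    exact ⟨k, by rw [h2lo]; exact hk⟩
  -- Step 2: fix the upper half
  obtain ⟨b, hbA, _⟩ := adjust p (lo g x₂) (up g x₂)
    (fun i => y ⟨i.val, by have := i.isLt; omega⟩) h2I hε
  set x₃ := (matUp b p).mulVec x₂ with hx₃
  have h3up : ∀ i, up g x₃ i = up g x₂ i + (cmat b p).mulVec (lo g x₂) i := fun i => by
    rw [hx₃, up_matUp]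
  have h3lo : ∀ i, lo g x₃ i = lo g x₂ i := fun i => lo_matUp b p x₂ i
  have h3A : ∀ i, ∃ k : ℤ, |up g x₃ i + k - y ⟨i.val, by have := i.isLt; omega⟩| < ε := by
    intro i
    obtain ⟨k, hk⟩ := hbA i
    exact ⟨k, by rw [h3up]; exact hk⟩
  have h3B : ∀ i, ∃ k : ℤ, |lo g x₃ i + k - y ⟨g + i.val, by have := i.isLt; omega⟩| < ε := by
    intro i
    obtain ⟨k, hk⟩ := h2A i
    exact ⟨k, by rw [h3lo]; exact hk⟩
  -- Assemble
  choose ku hku using h3A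
  choose kl hkl using h3B
  set M := matUp b p * (matLow c p * M₀) with hM
  have hMmem : M ∈ SpZ g := mul_mem (matUp_mem b p) (mul_mem (matLow_mem c p) hM₀)
  have hMx : M.mulVec x = x₃ := by
    rw [hM, ← Matrix.mulVec_mulVec, ← Matrix.mulVec_mulVec]
  set K : Fin (2 * g) → ℤ := fun i =>
    if h : i.val < g then ku ⟨i.val, h⟩ else kl ⟨i.val - g, by have := i.isLt; omega⟩ with hK
  refine ⟨M.mulVec x + fun i => ((K i : ℤ) : ℝ), ?_, M, hMmem, K, rfl⟩
  rw [Metric.mem_ball]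
  rw [dist_pi_lt_iff hε]
  intro i
  rw [Real.dist_eq, hMx]
  by_cases hig : i.val < g
  · have h1 : x₃ i = up g x₃ ⟨i.val, hig⟩ := congrArg x₃ (Fin.ext rfl)
    have h2 : K i = ku ⟨i.val, hig⟩ := dif_pos hig
    have h3 : y i = y ⟨(⟨i.val, hig⟩ : Fin g).val, by omega⟩ := congrArg y (Fin.ext rfl)
    show |x₃ i + (K i : ℝ) - y i| < ε
    rw [h1, h2, h3]
    exact hku ⟨i.val, hig⟩
  · have hig' : i.val - g < g := by have := i.isLt; omega
    have h1 : x₃ i = lo g x₃ ⟨i.val - g, hig'⟩ := congrArg x₃ (Fin.ext (by simp; omega))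
    have h2 : K i = kl ⟨i.val - g, hig'⟩ := dif_neg hig
    have h3 : y i = y ⟨g + (⟨i.val - g, hig'⟩ : Fin g).val, by omega⟩ :=
      congrArg y (Fin.ext (by simp; omega))
    show |x₃ i + (K i : ℝ) - y i| < ε
    rw [h1, h2, h3]
    exact hkl ⟨i.val - g, hig'⟩

end SpzAux

namespace SpzAux
open Finset

variable {g : ℕ}

lemma finite_orbit (x : Fin (2 * g) → ℝ) (hx : ∀ i, ∃ q : ℚ, x i = (q : ℝ)) :
    Set.Finite
      ((fun y : Fin (2 * g) → ℝ => fun i => ((y i : ℝ) : AddCircle (1 : ℝ))) ''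
        {y | ∃ M ∈ SpZ g, y = M.mulVec x}) := by
  choose r hr using hx
  set d : ℕ := ∏ i, (r i).den with hd
  have hd0 : 0 < d := Finset.prod_pos fun i _ => (r i).pos
  have hdR : (0 : ℝ) < d := by exact_mod_cast hd0
  have hxd : ∀ i, ∃ z : ℤ, x i * d = (z : ℝ) := by
    intro i
    refine ⟨(r i).num * ∏ j ∈ Finset.univ.erase i, ((r j).den : ℤ), ?_⟩
    rw [hr i, hd]
    rw [← Finset.mul_prod_erase Finset.univ (fun j => (r j).den) (Finset.mem_univ i)]
    push_cast
    rw [← mul_assoc]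
    congr 1
    exact_mod_cast congrArg (fun q : ℚ => (q : ℝ)) (Rat.mul_den_eq_num (r i))
  set S : Set (AddCircle (1 : ℝ)) :=
    (fun k : ℤ => (((k : ℝ) / d : ℝ) : AddCircle (1 : ℝ))) '' (Set.Icc (0 : ℤ) d) with hS
  have hSfin : S.Finite := (Set.finite_Icc _ _).image _
  apply Set.Finite.subset (Set.Finite.pi (fun _ : Fin (2 * g) => hSfin))
  rintro f ⟨y, ⟨M, hM, rfl⟩, rfl⟩
  rw [Set.mem_pi]
  intro i _
  -- M.mulVec x i = N / d for an integer N
  choose a ha using hM.2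
  choose z hz using hxd
  set N : ℤ := ∑ l, a i l * z l with hN
  have hval : M.mulVec x i = (N : ℝ) / d := by
    rw [eq_div_iff (ne_of_gt hdR)]
    rw [Matrix.mulVec, dotProduct, Finset.sum_mul]
    rw [hN]
    push_cast
    refine Finset.sum_congr rfl fun l _ => ?_
    rw [ha, mul_assoc, hz]
  -- reduce N mod d
  set N' : ℤ := N % (d : ℤ) with hN'
  have hmem : N' ∈ Set.Icc (0 : ℤ) (d : ℤ) := by
    constructor
    · exact Int.emod_nonneg N (by exact_mod_cast ne_of_gt hd0)
    · exact le_of_lt (Int.emod_lt_of_pos N (by exact_mod_cast hd0))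
  refine ⟨N', hmem, ?_⟩
  have h1 : N % (d : ℤ) + (d : ℤ) * (N / (d : ℤ)) = N := Int.emod_add_mul_ediv N d
  have h2 : (N : ℝ) = (N' : ℝ) + (d : ℝ) * ((N / (d : ℤ) : ℤ) : ℝ) := by
    rw [hN']
    exact_mod_cast h1.symm
  have hsplit : (N : ℝ) / d = (N' : ℝ) / d + ((N / (d : ℤ) : ℤ) : ℝ) := by
    rw [h2]
    field_simp
  show (((N' : ℝ) / d : ℝ) : AddCircle (1 : ℝ)) = ((M.mulVec x i : ℝ) : AddCircle (1 : ℝ))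
  rw [hval, hsplit, AddCircle.coe_add]
  have hz0 : (((N / (d : ℤ) : ℤ) : ℝ) : AddCircle (1 : ℝ)) = 0 := by
    rw [AddCircle.coe_eq_zero_iff]
    exact ⟨N / (d : ℤ), by simp⟩
  rw [hz0, add_zero]

end SpzAux


/-- if `x ∉ ℚ^(2g)` then `{M·x + k : M ∈ Sp(2g,ℤ), k ∈ ℤ^(2g)}`
is dense in `ℝ^(2g)`; if `x ∈ ℚ^(2g)` then the image of the `Sp(2g,ℤ)`-orbit
of `x` in the torus `ℝ^(2g)/ℤ^(2g)` is finite. -/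
theorem spz_affine_orbit_dense_or_finite (g : ℕ) (hg : 2 ≤ g)
    (x : Fin (2 * g) → ℝ) :
    ((¬ ∀ i, ∃ q : ℚ, x i = (q : ℝ)) →
      Dense {y : Fin (2 * g) → ℝ |
        ∃ M ∈ SpZ g, ∃ k : Fin (2 * g) → ℤ,
          y = M.mulVec x + fun i => ((k i : ℤ) : ℝ)}) ∧
    ((∀ i, ∃ q : ℚ, x i = (q : ℝ)) →
      Set.Finite
        ((fun y : Fin (2 * g) → ℝ => fun i => ((y i : ℝ) : AddCircle (1 : ℝ))) ''
          {y | ∃ M ∈ SpZ g, y = M.mulVec x})) := by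
  constructor
  · intro h
    push_neg at h
    obtain ⟨j, hj⟩ := h
    have hirr : Irrational (x j) := by
      rintro ⟨q, hq⟩
      exact hj q hq.symm
    exact SpzAux.dense_orbit x j hirr
  · exact SpzAux.finite_orbit x
end

section
/- Let a, b ∈ ℂˣ be such that the subgroup of ℂˣ generated by a and b is not contained in the unit circle (equivalently, |a| ≠ 1 or |b| ≠ 1). Then there exist a', b' ∈ ℂ with exp(a') = a, exp(b') = b, and Re(a')·Im(b') − Im(a')·Re(b') > 0; that is, (a', b') is an oriented basis of ℂ as a real vector space. -/
open Complex Real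

lemma helper_oriented (a b : ℂˣ) (ha : ‖(a : ℂ)‖ ≠ 1) :
    ∃ a' b' : ℂ, Complex.exp a' = (a : ℂ) ∧ Complex.exp b' = (b : ℂ) ∧
      0 < a'.re * b'.im - a'.im * b'.re := by
  set L : ℝ := Real.log ‖(a : ℂ)‖ with hL
  set M : ℝ := Real.log ‖(b : ℂ)‖ with hM
  set A : ℝ := Complex.arg (a : ℂ) with hA
  set B : ℝ := Complex.arg (b : ℂ) with hB
  have ha0 : (a : ℂ) ≠ 0 := a.ne_zero
  have hb0 : (b : ℂ) ≠ 0 := b.ne_zero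
  have habs : ‖(a : ℂ)‖ ≠ 0 := by simp [ha0]
  have hLne : L ≠ 0 := by
    intro h0
    rcases Real.log_eq_zero.mp h0 with h1 | h1 | h1
    · exact habs h1
    · exact ha h1
    · have := norm_nonneg (a : ℂ); linarith [h1 ▸ this]
  have hpi : (0 : ℝ) < 2 * Real.pi := by positivity
  have hkey : ∃ n : ℤ, A * M - L * B < (n : ℝ) * (2 * Real.pi * L) := by
    rcases hLne.lt_or_gt with hneg | hpos
    · obtain ⟨n, hn⟩ := exists_int_lt ((A * M - L * B) / (2 * Real.pi * L))
      refine ⟨n, ?_⟩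
      have hc : 2 * Real.pi * L < 0 := by nlinarith
      have h2 := mul_lt_mul_of_neg_right hn hc
      rwa [div_mul_cancel₀ _ (ne_of_lt hc)] at h2
    · obtain ⟨n, hn⟩ := exists_int_gt ((A * M - L * B) / (2 * Real.pi * L))
      refine ⟨n, ?_⟩
      have hc : 0 < 2 * Real.pi * L := by nlinarith
      exact (div_lt_iff₀ hc).mp hn
  obtain ⟨n, hn⟩ := hkey
  refine ⟨Complex.log (a : ℂ), Complex.log (b : ℂ) + n * (2 * Real.pi * Complex.I), ?_, ?_, ?_⟩
  · exact Complex.exp_log ha0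
  · rw [Complex.exp_add, Complex.exp_log hb0, Complex.exp_int_mul_two_pi_mul_I]
    ring
  · have hre : (Complex.log (b : ℂ) + n * (2 * Real.pi * Complex.I)).re = M := by
      simp [Complex.log_re, hM]
    have him : (Complex.log (b : ℂ) + n * (2 * Real.pi * Complex.I)).im
        = B + n * (2 * Real.pi) := by
      simp [Complex.log_im, hB]
    rw [hre, him, Complex.log_re, Complex.log_im, ← hL, ← hA]
    nlinarith

/-- if `a, b ∈ ℂˣ` generate a subgroup not contained in the unit
circle (equivalently `|a| ≠ 1` or `|b| ≠ 1`), then there are logarithms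
`a', b'` of `a, b` forming an oriented real basis of `ℂ`, i.e. with
`Re(a')·Im(b') - Im(a')·Re(b') > 0`. -/
theorem exists_oriented_logarithms (a b : ℂˣ)
    (h : ‖(a : ℂ)‖ ≠ 1 ∨ ‖(b : ℂ)‖ ≠ 1) :
    ∃ a' b' : ℂ, Complex.exp a' = (a : ℂ) ∧ Complex.exp b' = (b : ℂ) ∧
      0 < a'.re * b'.im - a'.im * b'.re := by
  rcases h with h | h
  · exact helper_oriented a b h
  · have hinv : ‖((b⁻¹ : ℂˣ) : ℂ)‖ ≠ 1 := by
      simp only [Units.val_inv_eq_inv_val, norm_inv]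
      intro h1
      exact h (by field_simp at h1; exact h1.symm)
    obtain ⟨u, v, hu, hv, huv⟩ := helper_oriented b⁻¹ a hinv
    refine ⟨v, -u, hv, ?_, ?_⟩
    · rw [Complex.exp_neg, hu]
      simp
    · simp only [Complex.neg_re, Complex.neg_im]
      nlinarith
end
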